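/- Let H be a finite-dimensional real inner product space and let C ⊆ H be a nonempty closed set. Then C is convex if and only if for every x ∈ H there is exactly one point p ∈ C with ‖p − x‖ = inf_{c ∈ C} ‖c − x‖, i.e., the projector onto C is everywhere single-valued. -/

import Mathlib

set_option maxHeartbeats 1000000

open Metric Filter
open scoped RealInnerProductSpace Topology

section Aux

variable {H : Type*} [NormedAddCommGroup H] [InnerProductSpace ℝ H] [FiniteDimensional ℝ H]
  {C : Set H} {P : H → H}

private lemma aux_sq_le {z c : H} (hc : c ∈ C) : (infDist z C) ^ 2 ≤ ‖z - c‖ ^ 2 := by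
  have h := infDist_le_dist_of_mem (x := z) hc
  rw [dist_eq_norm] at h
  exact pow_le_pow_left₀ infDist_nonneg h 2

/-- The subgradient inequality for `φ z = ‖z‖²/2 - d(z,C)²/2` with subgradient `P x` at `x`. -/
private lemma aux_subgrad (hdist : ∀ x, ‖P x - x‖ = infDist x C) (hmem : ∀ x, P x ∈ C)
    (x z : H) :
    ‖x‖ ^ 2 / 2 - (infDist x C) ^ 2 / 2 + ⟪P x, z - x⟫ ≤ ‖z‖ ^ 2 / 2 - (infDist z C) ^ 2 / 2 := by
  have h1 : (infDist z C) ^ 2 ≤ ‖z - P x‖ ^ 2 := aux_sq_le (hmem x)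
  have h2 : (infDist x C) ^ 2 = ‖x - P x‖ ^ 2 := by
    rw [← hdist x, norm_sub_rev]
  have e1 : ‖z - P x‖ ^ 2 = ‖z‖ ^ 2 - 2 * ⟪z, P x⟫ + ‖P x‖ ^ 2 := norm_sub_sq_real _ _
  have e2 : ‖x - P x‖ ^ 2 = ‖x‖ ^ 2 - 2 * ⟪x, P x⟫ + ‖P x‖ ^ 2 := norm_sub_sq_real _ _
  have e3 : ⟪P x, z - x⟫ = ⟪z, P x⟫ - ⟪x, P x⟫ := by
    rw [inner_sub_right, real_inner_comm z, real_inner_comm x]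
  linarith

/-- Sequential continuity of the projection onto a Chebyshev set. -/
private lemma aux_cont (hCclosed : IsClosed C) (hmem : ∀ x, P x ∈ C)
    (hdist : ∀ x, ‖P x - x‖ = infDist x C)
    (huniq : ∀ x p, p ∈ C → ‖p - x‖ = infDist x C → p = P x)
    {u : ℕ → H} {x : H} (hu : Tendsto u atTop (𝓝 x)) :
    Tendsto (fun n => P (u n)) atTop (𝓝 (P x)) := by
  apply tendsto_of_subseq_tendsto
  intro ns hns
  have h1 : Tendsto (fun n => u (ns n)) atTop (𝓝 x) := hu.comp hns
  -- boundedness of the projected subsequence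
  have hf : Tendsto (fun n => infDist (u (ns n)) C + ‖u (ns n)‖) atTop
      (𝓝 (infDist x C + ‖x‖)) :=
    (((continuous_infDist_pt C).tendsto x).comp h1).add ((continuous_norm.tendsto x).comp h1)
  obtain ⟨B, hB⟩ := hf.bddAbove_range
  have hball : ∀ n, P (u (ns n)) ∈ closedBall (0 : H) B := by
    intro n
    have h2 : ‖P (u (ns n))‖ ≤ infDist (u (ns n)) C + ‖u (ns n)‖ := by
      calc ‖P (u (ns n))‖ ≤ ‖P (u (ns n)) - u (ns n)‖ + ‖u (ns n)‖ := by
            simpa using norm_add_le (P (u (ns n)) - u (ns n)) (u (ns n))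
        _ = infDist (u (ns n)) C + ‖u (ns n)‖ := by rw [hdist]
    have h3 : infDist (u (ns n)) C + ‖u (ns n)‖ ≤ B := hB ⟨n, rfl⟩
    simpa [mem_closedBall, dist_eq_norm] using h2.trans h3
  obtain ⟨b, _, ms, hms, hmst⟩ :=
    tendsto_subseq_of_bounded (isBounded_closedBall (x := (0 : H)) (r := B)) hball
  refine ⟨ms, ?_⟩
  have hbC : b ∈ C := hCclosed.mem_of_tendsto hmst (Eventually.of_forall fun n => hmem _)
  have husub : Tendsto (fun n => u (ns (ms n))) atTop (𝓝 x) := h1.comp hms.tendsto_atTop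
  have hnorm : Tendsto (fun n => ‖P (u (ns (ms n))) - u (ns (ms n))‖) atTop (𝓝 ‖b - x‖) :=
    (hmst.sub husub).norm
  have hinf : Tendsto (fun n => ‖P (u (ns (ms n))) - u (ns (ms n))‖) atTop
      (𝓝 (infDist x C)) := by
    simp only [hdist]
    exact ((continuous_infDist_pt C).tendsto x).comp husub
  have hbx : ‖b - x‖ = infDist x C := tendsto_nhds_unique hnorm hinf
  have : b = P x := huniq x b hbC hbx
  rwa [this] at hmst

end Aux

/-- A nonempty closed set `C` in a finite-dimensional real inner product
space is convex if and only if every point `x` has exactly one best approximation in `C`,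
i.e. exactly one `p ∈ C` with `‖p - x‖ = inf_{c ∈ C} ‖c - x‖`. -/
theorem stmt16 {H : Type*} [NormedAddCommGroup H] [InnerProductSpace ℝ H]
    [FiniteDimensional ℝ H]
    (C : Set H) (hCne : C.Nonempty) (hCclosed : IsClosed C) :
    Convex ℝ C ↔ ∀ x : H, ∃! p, p ∈ C ∧ ‖p - x‖ = Metric.infDist x C := by
  constructor
  · -- convex ⇒ unique best approximation
    intro hconv x
    obtain ⟨p, hpC, hpd⟩ := hCclosed.exists_infDist_eq_dist hCne x
    refine ⟨p, ⟨hpC, by rw [hpd, dist_comm, dist_eq_norm]⟩, ?_⟩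
    rintro q ⟨hqC, hqd⟩
    have hpd' : ‖p - x‖ = infDist x C := by rw [hpd, dist_comm, dist_eq_norm]
    -- midpoint argument
    set m : H := (1/2 : ℝ) • q + (1/2 : ℝ) • p with hm
    clear_value m
    have hmC : m ∈ C := by
      rw [hm]; exact hconv hqC hpC (by norm_num) (by norm_num) (by norm_num)
    have h1 : infDist x C ≤ ‖m - x‖ := by
      rw [← dist_eq_norm, dist_comm]
      exact infDist_le_dist_of_mem hmC
    have par := parallelogram_law_with_norm ℝ (q - x) (p - x)
    have e1 : q - x + (p - x) = (2 : ℝ) • (m - x) := by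
      rw [hm]; module
    have e2 : q - x - (p - x) = q - p := by abel
    rw [e1, e2, norm_smul] at par
    simp only [Real.norm_ofNat] at par
    have hq0 : ‖q - p‖ = 0 := by
      nlinarith [norm_nonneg (q - p), norm_nonneg (m - x), infDist_nonneg (x := x) (s := C)]
    have : q - p = 0 := norm_eq_zero.mp hq0
    linear_combination (norm := abel) this
  · -- unique best approximation ⇒ convex
    intro hyp
    choose P hP hPu using hyp
    have hmem : ∀ x, P x ∈ C := fun x => (hP x).1
    have hdist : ∀ x, ‖P x - x‖ = infDist x C := fun x => (hP x).2
    have huniq : ∀ x p, p ∈ C → ‖p - x‖ = infDist x C → p = P x := fun x p h1 h2 =>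
      hPu x p ⟨h1, h2⟩
    intro a ha b hb θ μ hθ hμ hθμ
    set y : H := θ • a + μ • b with hy
    clear_value y
    set M : ℝ := max (‖a‖ ^ 2) (‖b‖ ^ 2) with hMdef
    clear_value M
    -- φ z = ‖z‖²/2 - d(z,C)²/2
    set φ : H → ℝ := fun z => ‖z‖ ^ 2 / 2 - (infDist z C) ^ 2 / 2 with hφ
    clear_value φ
    have hlow : ∀ c ∈ C, ∀ z : H, ⟪c, z⟫ - ‖c‖ ^ 2 / 2 ≤ φ z := by
      intro c hc z
      have h1 : (infDist z C) ^ 2 ≤ ‖z - c‖ ^ 2 := aux_sq_le hc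
      have e1 : ‖z - c‖ ^ 2 = ‖z‖ ^ 2 - 2 * ⟪z, c⟫ + ‖c‖ ^ 2 := norm_sub_sq_real _ _
      have e2 : ⟪c, z⟫ = ⟪z, c⟫ := real_inner_comm z c
      simp only [hφ]
      linarith
    have hM : ∀ z : H, -(M / 2) ≤ φ z - ⟪y, z⟫ := by
      intro z
      rcases le_or_gt 0 ⟪a - b, z⟫ with hab | hab
      · have h1 := hlow a ha z
        have e1 : ⟪a, z⟫ - ⟪y, z⟫ = μ * ⟪a - b, z⟫ := by
          rw [hy, inner_add_left, real_inner_smul_left, real_inner_smul_left,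
            inner_sub_left]
          linear_combination (-(inner ℝ a z : ℝ)) * hθμ
        have h2 : ‖a‖ ^ 2 ≤ M := by rw [hMdef]; exact le_max_left _ _
        nlinarith
      · have h1 := hlow b hb z
        have e1 : ⟪b, z⟫ - ⟪y, z⟫ = θ * ⟪b - a, z⟫ := by
          rw [hy, inner_add_left, real_inner_smul_left, real_inner_smul_left,
            inner_sub_left]
          linear_combination (-(inner ℝ b z : ℝ)) * hθμ
        have h2 : ‖b‖ ^ 2 ≤ M := by rw [hMdef]; exact le_max_right _ _
        have h3 : (0:ℝ) ≤ θ * ⟪b - a, z⟫ := by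
          have : ⟪b - a, z⟫ = -⟪a - b, z⟫ := by
            rw [inner_sub_left, inner_sub_left]; ring
          nlinarith
        nlinarith
    have hφcont : Continuous φ := by
      simp only [hφ]
      exact ((continuous_norm.pow 2).div_const 2).sub
        (((continuous_infDist_pt C).pow 2).div_const 2)
    set K : ℝ := φ 0 + M / 2 with hK
    clear_value K
    have hK0 : 0 ≤ K := by
      have := hM 0
      simp only [inner_zero_right] at this
      linarith
    -- key step: for every ε > 0 there is a point projecting near y
    have key : ∀ ε : ℝ, 0 < ε → ∃ q ∈ C, ‖q - y‖ ^ 2 ≤ 2 * K * ε := by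
      intro ε hε
      set G : H → ℝ := fun z => φ z - ⟪y, z⟫ + ε / 2 * ‖z‖ ^ 2 with hG
      clear_value G
      have hGcont : Continuous G := by
        simp only [hG]
        have : Continuous fun z : H => ⟪y, z⟫ := continuous_const.inner continuous_id
        fun_prop
      have hGcoer : Tendsto G (cocompact H) atTop := by
        have h1 : Tendsto (fun z : H => ε / 2 * ‖z‖ ^ 2 - M / 2) (cocompact H) atTop := by
          apply Tendsto.comp (g := fun r : ℝ => ε / 2 * r ^ 2 - M / 2)
            ?_ tendsto_norm_cocompact_atTop
          apply tendsto_atTop_add_const_right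
          exact (tendsto_pow_atTop two_ne_zero).const_mul_atTop (by linarith)
        apply tendsto_atTop_mono _ h1
        intro z
        have := hM z
        simp only [hG]
        linarith
      obtain ⟨xε, hxε⟩ := hGcont.exists_forall_le hGcoer
      -- the optimality condition: P xε = y - ε • xε
      set w : H := y - ε • xε with hw
      clear_value w
      set h : H := w - P xε with hh
      clear_value h
      have hkey : ∀ t : ℝ, 0 < t → ⟪w, h⟫ ≤ ⟪P (xε + t • h), h⟫ + ε * t * ‖h‖ ^ 2 / 2 := by
        intro t ht
        have hmin := hxε (xε + t • h)
        have e1 : ‖xε + t • h‖ ^ 2 = ‖xε‖ ^ 2 + 2 * t * ⟪xε, h⟫ + t ^ 2 * ‖h‖ ^ 2 := by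
          rw [norm_add_sq_real, real_inner_smul_right, norm_smul]
          have : |t| = t := abs_of_pos ht
          rw [Real.norm_eq_abs, this]
          ring
        have e2 : ⟪y, xε + t • h⟫ = ⟪y, xε⟫ + t * ⟪y, h⟫ := by
          rw [inner_add_right, real_inner_smul_right]
        -- lower bound on φ (xε + t • h) from minimality
        have hlb : φ xε + t * ⟪w, h⟫ - ε * t ^ 2 * ‖h‖ ^ 2 / 2 ≤ φ (xε + t • h) := by
          simp only [hG] at hmin
          have e3 : ⟪w, h⟫ = ⟪y, h⟫ - ε * ⟪xε, h⟫ := by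
            rw [hw, inner_sub_left, real_inner_smul_left]
          rw [e1, e2] at hmin
          nlinarith
        -- upper bound from subgradient inequality at xε + t • h
        have hub := aux_subgrad hdist hmem (xε + t • h) xε
        have e4 : xε - (xε + t • h) = -(t • h) := by abel
        rw [e4, inner_neg_right, real_inner_smul_right] at hub
        simp only [hφ] at hlb hub ⊢
        nlinarith
      have hwP : w = P xε := by
        have hle : ⟪w, h⟫ ≤ ⟪P xε, h⟫ := by
          have htend : Tendsto (fun n : ℕ => xε + (1 / (n + 1) : ℝ) • h) atTop (𝓝 xε) := by
            have h1 : Tendsto (fun n : ℕ => (1 / (n + 1) : ℝ)) atTop (𝓝 0) :=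
              tendsto_one_div_add_atTop_nhds_zero_nat
            have h2 : Tendsto (fun n : ℕ => (1 / (n + 1) : ℝ) • h) atTop (𝓝 (0 : H)) := by
              simpa using h1.smul_const h
            simpa using tendsto_const_nhds.add h2
          have hPtend := aux_cont hCclosed hmem hdist huniq htend
          have hlim : Tendsto
              (fun n : ℕ => ⟪P (xε + (1 / (n + 1) : ℝ) • h), h⟫
                + ε * (1 / (n + 1) : ℝ) * ‖h‖ ^ 2 / 2) atTop (𝓝 ⟪P xε, h⟫) := by
            have l1 : Tendsto (fun n : ℕ => ⟪P (xε + (1 / (n + 1) : ℝ) • h), h⟫) atTop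
                (𝓝 ⟪P xε, h⟫) := by
              have : Continuous fun z : H => ⟪z, h⟫ := continuous_id.inner continuous_const
              exact (this.tendsto _).comp hPtend
            have l2 : Tendsto (fun n : ℕ => ε * (1 / (n + 1) : ℝ) * ‖h‖ ^ 2 / 2) atTop
                (𝓝 0) := by
              have h1 : Tendsto (fun n : ℕ => (1 / (n + 1) : ℝ)) atTop (𝓝 0) :=
                tendsto_one_div_add_atTop_nhds_zero_nat
              have := (h1.const_mul ε).mul_const (‖h‖ ^ 2 / 2)
              simpa [mul_assoc, mul_div_assoc] using this
            simpa using l1.add l2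
          refine le_of_tendsto_of_tendsto' tendsto_const_nhds hlim fun n => ?_
          exact hkey _ (by positivity)
        have : ⟪h, h⟫ ≤ 0 := by
          nth_rewrite 1 [hh]
          rw [inner_sub_left]
          linarith
        have h0 : h = 0 := by
          have := real_inner_self_nonneg (x := h)
          have hhf : ⟪h, h⟫ = 0 := le_antisymm ‹⟪h, h⟫ ≤ 0› this
          exact inner_self_eq_zero.mp hhf
        rw [hh, sub_eq_zero] at h0
        exact h0
      -- the bound on the minimizer
      have hbound : ε / 2 * ‖xε‖ ^ 2 ≤ K := by
        have hmin := hxε 0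
        simp only [hG, inner_zero_right, norm_zero] at hmin
        have := hM xε
        simp only [hK]
        nlinarith
      refine ⟨P xε, hmem xε, ?_⟩
      have e5 : P xε - y = -(ε • xε) := by
        rw [← hwP, hw]; abel
      rw [e5, norm_neg, norm_smul, Real.norm_eq_abs, abs_of_pos hε, mul_pow]
      nlinarith
    -- take ε = 1/(n+1) → 0 and use closedness of C
    have hseq : ∀ n : ℕ, ∃ q ∈ C, ‖q - y‖ ^ 2 ≤ 2 * K * (1 / (n + 1) : ℝ) := fun n =>
      key _ (by positivity)
    choose q hqC hq using hseq
    have hqy : Tendsto q atTop (𝓝 y) := by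
      rw [tendsto_iff_norm_sub_tendsto_zero]
      have hsq : Tendsto (fun n => ‖q n - y‖ ^ 2) atTop (𝓝 0) := by
        have h1 : Tendsto (fun n : ℕ => 2 * K * (1 / (n + 1) : ℝ)) atTop (𝓝 0) := by
          simpa using tendsto_one_div_add_atTop_nhds_zero_nat.const_mul (2 * K)
        exact squeeze_zero (fun n => by positivity) hq h1
      have := hsq.sqrt
      simpa [Real.sqrt_sq (norm_nonneg _)] using this
    exact hCclosed.mem_of_tendsto hqy (Eventually.of_forall fun n => hqC n)
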